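/- Let ε be a real number with 0 < ε < 1/2, let B = log((2ε + 1)/(4ε)), and let A = ⌈(3B + 6)/(8ε) − (B + 1)/2⌉. Then for every integer n ≥ 2, one has hd(n) ≤ ⌈n/2⌉ + ⌊εn⌋ + A − 2. -/

import Mathlib

/-- `hd n` is the largest integer `d` with `0 ≤ d ≤ n + 1` such that
`C(n - d + 2s - 1, 2s) ≥ C(d - 1, 2s - 1)` for all integers `s` with `1 ≤ s ≤ ⌊d/2⌋`.
(Here `n - d + 2s - 1` is written as `n + 2 * s - 1 - d`, which does not truncate
since `d ≤ n + 1 ≤ n + 2 * s - 1` for `s ≥ 1`.) By a combinatorial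
characterization of the Hilbert depth, `hd n = hdepth (Sₙ / Iₙ)` where
`Iₙ = (x₁y, …, xₙy) ⊂ Sₙ = K[x₁, …, xₙ, y]` is the edge ideal of the star graph
with `n` rays. -/
noncomputable def hd (n : ℕ) : ℕ :=
  sSup {d : ℕ | d ≤ n + 1 ∧ ∀ s : ℕ, 1 ≤ s → s ≤ d / 2 →
    Nat.choose (d - 1) (2 * s - 1) ≤ Nat.choose (n + 2 * s - 1 - d) (2 * s)}

private lemma descFact_mul_pow_le (m : ℕ) : ∀ p q : ℕ, m ≤ p → p ≤ q →
    p.descFactorial m * q ^ m ≤ q.descFactorial m * p ^ m := by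
  induction m with
  | zero => intro p q _ _; simp
  | succ m ih =>
    intro p q hmp hpq
    have hm : m ≤ p := Nat.le_of_succ_le hmp
    have key : (p - m) * q ≤ (q - m) * p := by
      rw [Nat.sub_mul, Nat.sub_mul, Nat.mul_comm p q]
      exact Nat.sub_le_sub_left (Nat.mul_le_mul_left m hpq) _
    calc p.descFactorial (m+1) * q^(m+1)
        = ((p - m) * q) * (p.descFactorial m * q ^ m) := by
          rw [Nat.descFactorial_succ]; ring
      _ ≤ ((p - m) * q) * (q.descFactorial m * p ^ m) :=
          Nat.mul_le_mul_left _ (ih p q hm hpq)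
      _ ≤ ((q - m) * p) * (q.descFactorial m * p ^ m) :=
          Nat.mul_le_mul_right _ key
      _ = q.descFactorial (m+1) * p^(m+1) := by
          rw [Nat.descFactorial_succ]; ring

private lemma star_ineq {s p q : ℕ} (hs : 1 ≤ s) (hps : 2*s ≤ p) (hpq : p ≤ q)
    (hc : Nat.choose q (2*s-1) ≤ Nat.choose p (2*s)) :
    2*s * q^(2*s-1) ≤ (p - (2*s-1)) * p^(2*s-1) := by
  set m := 2*s-1 with hm
  have hm1 : m + 1 = 2*s := by omega
  have hmp : m ≤ p := by omega
  have e1 : Nat.choose p (m+1) * (m+1) = Nat.choose p m * (p - m) :=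
    Nat.choose_succ_right_eq p m
  have h2 : Nat.choose q m * (m+1) ≤ Nat.choose p m * (p - m) := by
    rw [← e1]
    exact Nat.mul_le_mul_right _ (by rw [hm1]; exact hc)
  have h3 : q.descFactorial m * (m+1) ≤ p.descFactorial m * (p - m) := by
    rw [Nat.descFactorial_eq_factorial_mul_choose, Nat.descFactorial_eq_factorial_mul_choose]
    calc Nat.factorial m * Nat.choose q m * (m+1) = Nat.factorial m * (Nat.choose q m * (m+1)) := by ring
      _ ≤ Nat.factorial m * (Nat.choose p m * (p-m)) := Nat.mul_le_mul_left _ h2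
      _ = Nat.factorial m * Nat.choose p m * (p-m) := by ring
  have h4 : p.descFactorial m * ((m+1) * q^m) ≤ p.descFactorial m * ((p - m) * p^m) := by
    calc p.descFactorial m * ((m+1) * q^m)
        = (p.descFactorial m * q^m) * (m+1) := by ring
      _ ≤ (q.descFactorial m * p^m) * (m+1) :=
          Nat.mul_le_mul_right _ (descFact_mul_pow_le m p q hmp hpq)
      _ = (q.descFactorial m * (m+1)) * p^m := by ring
      _ ≤ (p.descFactorial m * (p-m)) * p^m := Nat.mul_le_mul_right _ h3
      _ = p.descFactorial m * ((p-m) * p^m) := by ring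
  have hpos : 0 < p.descFactorial m :=
    Nat.pos_of_ne_zero (fun h0 => by
      have := Nat.descFactorial_eq_zero_iff_lt.mp h0; omega)
  have h5 := Nat.le_of_mul_le_mul_left h4 hpos
  rw [← hm1]
  exact h5

set_option maxHeartbeats 2000000 in
theorem stmt_12 (ε : ℝ) (hε0 : 0 < ε) (hε1 : ε < 1 / 2)
    (B : ℝ) (hB : B = Real.log ((2 * ε + 1) / (4 * ε)))
    (A : ℤ) (hA : A = ⌈(3 * B + 6) / (8 * ε) - (B + 1) / 2⌉)
    (n : ℕ) (hn : 2 ≤ n) :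
    (hd n : ℤ) ≤ ((n : ℤ) + 1) / 2 + ⌊ε * (n : ℝ)⌋ + A - 2 := by
  obtain ⟨w, hw⟩ : ∃ w : ℝ, w = 1/(2*ε) := ⟨_, rfl⟩
  have hw1 : 1 < w := by
    rw [hw, lt_div_iff₀ (by linarith)]; linarith
  have hwe : w * (2*ε) = 1 := by
    rw [hw]; field_simp
  have hBw : B = Real.log ((w+1)/2) := by
    rw [hB, hw]; congr 1; field_simp; ring
  have hB0 : 0 < B := by
    rw [hBw]; apply Real.log_pos; linarith
  have hAge : ((3*B+6)/(8*ε) - (B+1)/2 : ℝ) ≤ (A:ℝ) := by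
    rw [hA]; exact Int.le_ceil _
  have hXpos : (0:ℝ) < (3*B+6)/(8*ε) := by positivity
  have hXmul : (3*B+6)/(8*ε) * (8*ε) = 3*B+6 :=
    div_mul_cancel₀ _ (by positivity)
  have hX4 : (3*B+6)/4 < (3*B+6)/(8*ε) := by
    nlinarith only [hXpos, hXmul, hε0, hε1, hB0]
  have hA2R : (1:ℝ) < (A:ℝ) := by nlinarith only [hAge, hB0, hX4]
  have hA2 : (2:ℤ) ≤ A := by
    have : (1:ℤ) < A := by exact_mod_cast hA2R
    omega
  have hAw : (3*B+6)*w/4 - (B+1)/2 ≤ (A:ℝ) := by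
    have he : (3*B+6)/(8*ε) = (3*B+6)*w/4 := by
      rw [div_eq_iff (by positivity : (8:ℝ)*ε ≠ 0)]
      linear_combination (-(3*B+6)) * hwe
    rw [he] at hAge; exact hAge
  obtain ⟨aN, haN⟩ : ∃ a : ℕ, a = ⌊ε * (n:ℝ)⌋₊ := ⟨_, rfl⟩
  have hεn0 : (0:ℝ) ≤ ε * n := by positivity
  have hfl : ((aN:ℤ)) = ⌊ε * (n:ℝ)⌋ := by
    rw [haN]; exact Int.natCast_floor_eq_floor hεn0
  obtain ⟨AN, hANdef⟩ : ∃ a : ℕ, (a:ℤ) = A := ⟨A.toNat, Int.toNat_of_nonneg (by omega)⟩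
  have hAN2 : 2 ≤ AN := by omega
  have hANR : (AN:ℝ) = (A:ℝ) := by exact_mod_cast congrArg (Int.cast : ℤ → ℝ) hANdef
  obtain ⟨MN, hMN⟩ : ∃ m : ℕ, m = (n+1)/2 + aN + AN - 2 := ⟨_, rfl⟩
  have key : hd n ≤ MN := by
    refine csSup_le' ?_
    rintro d ⟨hdn, hcond⟩
    by_contra hlt'
    push_neg at hlt'
    have hdMN : MN + 1 ≤ d := hlt'
    have hd2 : 2 ≤ d := by omega
    -- step s = 1 : d ≤ n - 1
    have h1 := hcond 1 le_rfl (by omega)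
    have hdn1 : d + 1 ≤ n := by
      by_contra h'
      push_neg at h'
      have hz : n + 2*1 - 1 - d < 2*1 := by omega
      rw [Nat.choose_eq_zero_of_lt hz] at h1
      have h1' : Nat.choose (d-1) 1 ≤ 0 := by simpa using h1
      rw [Nat.choose_one_right] at h1'
      omega
    have hsum : (n+1)/2 + aN + AN ≤ n := by omega
    -- aN ≥ 1
    have hs1 : 1 ≤ aN := by
      by_contra h0
      push_neg at h0
      have ha0 : ⌊ε * (n:ℝ)⌋₊ = 0 := by rw [← haN]; omega
      have hεn1 : ε * n < 1 := Nat.floor_eq_zero.mp ha0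
      have hANle : (AN:ℝ) ≤ (n:ℝ)/2 := by
        have h' : 2*AN ≤ n := by omega
        have h'' : ((2*AN : ℕ):ℝ) ≤ ((n:ℕ):ℝ) := by exact_mod_cast h'
        push_cast at h''
        linarith only [h'']
      have hAn : 3/(4*ε) - 1/2 ≤ (A:ℝ) := by
        have hB8 : B/2 ≤ 3*B/(8*ε) := by
          rw [div_le_div_iff₀ (by norm_num) (by positivity)]
          nlinarith only [hB0, hε0, hε1]
        have hsplit : (3*B+6)/(8*ε) = 3*B/(8*ε) + 3/(4*ε) := by
          field_simp; ring
        rw [hsplit] at hAge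
        linarith only [hAge, hB8]
      have h3e : 3/(4*ε) * (4*ε) = 3 := div_mul_cancel₀ _ (by positivity)
      have hXn : 3/(4*ε) ≤ ((n:ℝ)+1)/2 := by linarith only [hANle, hAn, hANR]
      have hεX := mul_le_mul_of_nonneg_left hXn hε0.le
      linarith only [hεX, h3e, hεn1, hε1, hε0,
        mul_le_mul_of_nonneg_left hXn hε0.le]
    have h2sd : 2*aN ≤ d := by omega
    have hcs := hcond aN hs1 ((Nat.le_div_iff_mul_le (by norm_num)).mpr (by omega))
    obtain ⟨p, hpdef⟩ : ∃ p : ℕ, p = n + 2*aN - 1 - d := ⟨_, rfl⟩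
    obtain ⟨q, hqdef⟩ : ∃ q : ℕ, q = d - 1 := ⟨_, rfl⟩
    obtain ⟨g, hgdef⟩ : ∃ g : ℕ, g = n - d := ⟨_, rfl⟩
    rw [← hpdef, ← hqdef] at hcs
    have hps : 2*aN ≤ p := by omega
    have hpqN : p + (2*AN - 2) ≤ q := by omega
    have hpg : p - (2*aN-1) = g := by omega
    have hstar := star_ineq hs1 hps (by omega) hcs
    rw [hpg] at hstar
    obtain ⟨m, hmdef⟩ : ∃ m : ℕ, m = 2*aN - 1 := ⟨_, rfl⟩
    rw [← hmdef] at hstar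
    have hm1R : (m:ℝ) = 2*(aN:ℝ) - 1 := by
      rw [hmdef, Nat.cast_sub (by omega)]; push_cast; ring
    have hstarR : 2*(aN:ℝ) * (q:ℝ)^m ≤ (g:ℝ) * (p:ℝ)^m := by exact_mod_cast hstar
    have hSpos : (0:ℝ) < (aN:ℝ) := by exact_mod_cast hs1
    have hS1R : (1:ℝ) ≤ (aN:ℝ) := by exact_mod_cast hs1
    have hPpos : (0:ℝ) < (p:ℝ) := by
      have : 0 < p := by omega
      exact_mod_cast this
    have hAN2R : (2:ℝ) ≤ (AN:ℝ) := by exact_mod_cast hAN2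
    obtain ⟨C, hCdef⟩ : ∃ c : ℝ, c = 2*(AN:ℝ) - 2 := ⟨_, rfl⟩
    have hC2 : (2:ℝ) ≤ C := by rw [hCdef]; linarith only [hAN2R]
    have hPC : (p:ℝ) + C ≤ (q:ℝ) := by
      have h' : ((p + (2*AN - 2) : ℕ):ℝ) ≤ ((q:ℕ):ℝ) := by exact_mod_cast hpqN
      push_cast [Nat.cast_sub (show 2 ≤ 2*AN by omega)] at h'
      rw [hCdef]; linarith only [h']
    have hPCpos : (0:ℝ) < (p:ℝ) + C := by linarith only [hPpos, hC2]
    have hGpos : (0:ℝ) < (g:ℝ) := by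
      have : 0 < g := by omega
      exact_mod_cast this
    have hpow : ((p:ℝ) + C)^m ≤ (q:ℝ)^m :=
      pow_le_pow_left₀ (by linarith only [hPCpos]) hPC m
    have h2' : 2*(aN:ℝ)*((p:ℝ)+C)^m ≤ (g:ℝ)*(p:ℝ)^m := by
      calc 2*(aN:ℝ)*((p:ℝ)+C)^m ≤ 2*(aN:ℝ)*(q:ℝ)^m := by
            apply mul_le_mul_of_nonneg_left hpow (by linarith only [hSpos])
        _ ≤ (g:ℝ)*(p:ℝ)^m := hstarR
    have hRto : (((p:ℝ)+C)/(p:ℝ))^m ≤ (g:ℝ)/(2*(aN:ℝ)) := by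
      rw [div_pow, div_le_div_iff₀ (by positivity) (by positivity)]
      linarith only [h2']
    have hexp : Real.exp (C/((p:ℝ)+C)) ≤ ((p:ℝ)+C)/(p:ℝ) := by
      have h5 := Real.add_one_le_exp (-(C/((p:ℝ)+C)))
      have hepos := Real.exp_pos (C/((p:ℝ)+C))
      rw [Real.exp_neg] at h5
      have h6 : Real.exp (C/((p:ℝ)+C)) * (1 - C/((p:ℝ)+C)) ≤ 1 := by
        have h7 := mul_le_mul_of_nonneg_left h5 hepos.le
        rw [mul_inv_cancel₀ (ne_of_gt hepos)] at h7
        calc Real.exp (C/((p:ℝ)+C)) * (1 - C/((p:ℝ)+C))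
            = Real.exp (C/((p:ℝ)+C)) * (-(C/((p:ℝ)+C)) + 1) := by ring
          _ ≤ 1 := h7
      have h8 : 1 - C/((p:ℝ)+C) = (p:ℝ)/((p:ℝ)+C) := by
        field_simp; ring
      rw [h8] at h6
      rw [le_div_iff₀ hPpos]
      have h9 : (p:ℝ)/((p:ℝ)+C)*((p:ℝ)+C) = (p:ℝ) := div_mul_cancel₀ _ (ne_of_gt hPCpos)
      calc Real.exp (C/((p:ℝ)+C)) * (p:ℝ)
          = (Real.exp (C/((p:ℝ)+C)) * ((p:ℝ)/((p:ℝ)+C))) * ((p:ℝ)+C) := by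
            rw [mul_assoc, h9]
        _ ≤ 1 * ((p:ℝ)+C) := mul_le_mul_of_nonneg_right h6 hPCpos.le
        _ = (p:ℝ)+C := one_mul _
    have hexpm : Real.exp ((m:ℝ) * (C/((p:ℝ)+C))) ≤ (g:ℝ)/(2*(aN:ℝ)) := by
      rw [Real.exp_nat_mul]
      calc Real.exp (C/((p:ℝ)+C)) ^ m ≤ (((p:ℝ)+C)/(p:ℝ))^m :=
            pow_le_pow_left₀ (Real.exp_pos _).le hexp m
        _ ≤ (g:ℝ)/(2*(aN:ℝ)) := hRto
    have hGS0 : (0:ℝ) < (g:ℝ)/(2*(aN:ℝ)) := lt_of_lt_of_le (Real.exp_pos _) hexpm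
    have hlogmain : (m:ℝ) * (C/((p:ℝ)+C)) ≤ Real.log ((g:ℝ)/(2*(aN:ℝ))) :=
      (Real.le_log_iff_exp_le hGS0).mpr hexpm
    have hmCpos : (0:ℝ) < (m:ℝ) * (C/((p:ℝ)+C)) := by
      apply mul_pos
      · rw [hm1R]; linarith only [hS1R]
      · exact div_pos (by linarith only [hC2]) hPCpos
    by_cases hgs : g ≤ 2*aN
    · have hGle : (g:ℝ)/(2*(aN:ℝ)) ≤ 1 := by
        rw [div_le_one (by positivity)]
        exact_mod_cast hgs
      have hnp := Real.log_nonpos (le_of_lt hGS0) hGle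
      linarith only [hnp, hmCpos, hlogmain]
    · push_neg at hgs
      have hG2R : 2*(aN:ℝ) + 1 ≤ (g:ℝ) := by exact_mod_cast hgs
      have hL0 : 0 < Real.log ((g:ℝ)/(2*(aN:ℝ))) := by
        apply Real.log_pos
        rw [lt_div_iff₀ (by positivity)]
        linarith only [hG2R]
      have hmcL : (m:ℝ)*C ≤ ((p:ℝ)+C)*Real.log ((g:ℝ)/(2*(aN:ℝ))) := by
        have h10 := mul_le_mul_of_nonneg_right hlogmain hPCpos.le
        have e : (m:ℝ)*(C/((p:ℝ)+C))*((p:ℝ)+C) = (m:ℝ)*C := by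
          field_simp
        rw [e] at h10
        linarith only [h10]
      -- geometric bounds
      have hflt : ε * (n:ℝ) < (aN:ℝ) + 1 := by
        have h := Nat.lt_floor_add_one (ε*(n:ℝ))
        rw [← haN] at h
        exact_mod_cast h
      have hn2w : (n:ℝ) < 2*w*((aN:ℝ)+1) := by
        have h2w : 2*w*((aN:ℝ)+1) = ((aN:ℝ)+1)/ε := by
          rw [eq_div_iff (ne_of_gt hε0)]
          linear_combination ((aN:ℝ)+1) * hwe
        rw [h2w, lt_div_iff₀ hε0]
        nlinarith only [hflt]
      have hh2 : ((n/2 : ℕ):ℝ) ≤ (n:ℝ)/2 := by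
        have h' : (n/2)*2 ≤ n := by omega
        have h'' : (((n/2)*2 : ℕ):ℝ) ≤ ((n:ℕ):ℝ) := by exact_mod_cast h'
        push_cast at h''
        linarith only [h'']
      have hgsAN : g + aN + AN ≤ n/2 + 1 := by omega
      have hpAN : p + AN ≤ n/2 + aN := by omega
      have hGb : (g:ℝ) + (aN:ℝ) + (AN:ℝ) ≤ ((n/2:ℕ):ℝ) + 1 := by exact_mod_cast hgsAN
      have hPb : (p:ℝ) + (AN:ℝ) ≤ ((n/2:ℕ):ℝ) + (aN:ℝ) := by exact_mod_cast hpAN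
      have hhw : ((n/2:ℕ):ℝ) < w*((aN:ℝ)+1) := by linarith only [hn2w, hh2]
      have hGw : (g:ℝ) < w*((aN:ℝ)+1) - (aN:ℝ) - (AN:ℝ) + 1 := by
        linarith only [hGb, hhw]
      have hPCb : (p:ℝ) + C < w*((aN:ℝ)+1) + (aN:ℝ) + (AN:ℝ) - 2 := by
        rw [hCdef]; linarith only [hPb, hhw]
      have hAub : (AN:ℝ) < w*((aN:ℝ)+1) - 3*(aN:ℝ) := by
        linarith only [hGw, hG2R]
      have hDB : (p:ℝ) + C < 2*((aN:ℝ)+1)*(w-1) := by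
        nlinarith only [hPCb, hAub]
      have hw2 : 2 < w := by
        by_contra hw2'
        push_neg at hw2'
        have hm2 : w*((aN:ℝ)+1) ≤ 2*((aN:ℝ)+1) :=
          mul_le_mul_of_nonneg_right hw2' (by linarith only [hSpos])
        linarith only [hAub, hAN2R, hS1R, hm2]
      have hL1 : Real.log ((g:ℝ)/(2*(aN:ℝ))) ≤ B + 1/(aN:ℝ) := by
        have h9 : (g:ℝ) ≤ ((aN:ℝ)+1)*(w-1) := by
          nlinarith only [hGw, hAN2R]
        have h10 : (g:ℝ)/(2*(aN:ℝ)) ≤ ((aN:ℝ)+1)*(w-1)/(2*(aN:ℝ)) := by gcongr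
        have e11 : (w+1)/2*(((aN:ℝ)+1)/(aN:ℝ)) = ((w+1)*((aN:ℝ)+1))/(2*(aN:ℝ)) := by
          field_simp
        have h11 : ((aN:ℝ)+1)*(w-1)/(2*(aN:ℝ)) ≤ (w+1)/2*(((aN:ℝ)+1)/(aN:ℝ)) := by
          rw [e11, div_le_div_iff₀ (by positivity) (by positivity)]
          nlinarith only [hSpos, hS1R, hw1]
        have hmidpos : (0:ℝ) < ((aN:ℝ)+1)*(w-1)/(2*(aN:ℝ)) :=
          div_pos (mul_pos (by linarith only [hSpos]) (by linarith only [hw1]))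
            (by positivity)
        have h13 : Real.log (((aN:ℝ)+1)/(aN:ℝ)) ≤ 1/(aN:ℝ) := by
          have hpos13 : (0:ℝ) < ((aN:ℝ)+1)/(aN:ℝ) := by positivity
          have h14 := Real.log_le_sub_one_of_pos hpos13
          have h15 : ((aN:ℝ)+1)/(aN:ℝ) - 1 = 1/(aN:ℝ) := by
            field_simp; ring
          linarith only [h14, h15]
        calc Real.log ((g:ℝ)/(2*(aN:ℝ)))
            ≤ Real.log (((aN:ℝ)+1)*(w-1)/(2*(aN:ℝ))) := Real.log_le_log hGS0 h10
          _ ≤ Real.log ((w+1)/2*(((aN:ℝ)+1)/(aN:ℝ))) := Real.log_le_log hmidpos h11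
          _ = Real.log ((w+1)/2) + Real.log (((aN:ℝ)+1)/(aN:ℝ)) :=
              Real.log_mul (by positivity) (by positivity)
          _ ≤ B + 1/(aN:ℝ) := by rw [← hBw]; linarith only [h13]
      have hfin : (2*(aN:ℝ)-1)*C < 2*((aN:ℝ)+1)*(w-1)*(B + 1/(aN:ℝ)) := by
        have t1' : (2*(aN:ℝ)-1)*C ≤ ((p:ℝ)+C)*Real.log ((g:ℝ)/(2*(aN:ℝ))) := by
          rw [← hm1R]; exact hmcL
        have t2 : ((p:ℝ)+C)*Real.log ((g:ℝ)/(2*(aN:ℝ)))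
            < 2*((aN:ℝ)+1)*(w-1)*Real.log ((g:ℝ)/(2*(aN:ℝ))) :=
          mul_lt_mul_of_pos_right hDB hL0
        have t3 : 2*((aN:ℝ)+1)*(w-1)*Real.log ((g:ℝ)/(2*(aN:ℝ)))
            ≤ 2*((aN:ℝ)+1)*(w-1)*(B+1/(aN:ℝ)) := by
          apply mul_le_mul_of_nonneg_left hL1
          apply mul_nonneg
          · linarith only [hS1R]
          · linarith only [hw1]
        linarith only [t1', t2, t3]
      have hC0 : (3*w/2)*(B+2) - B - 3 ≤ C := by
        rw [hCdef, hANR]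
        linarith only [hAw]
      have hcase : 4 ≤ aN ∨ aN = 1 ∨ aN = 2 ∨ aN = 3 := by omega
      obtain h4 | hsc | hsc | hsc := hcase
      · -- aN ≥ 4
        have hS4 : (4:ℝ) ≤ (aN:ℝ) := by exact_mod_cast h4
        have c1 : (0:ℝ) ≤ w*(aN:ℝ) - 3.5*w + 3 := by
          have hx := mul_nonneg (show (0:ℝ) ≤ w by linarith only [hw1])
            (show (0:ℝ) ≤ (aN:ℝ) - 3.5 by linarith only [hS4])
          nlinarith only [hx]
        have c2 : (0:ℝ) ≤ (w-1)*(6*(aN:ℝ)^2 - 5*(aN:ℝ) - 2) := by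
          apply mul_nonneg (by linarith only [hw1])
          nlinarith only [hS4, sq_nonneg ((aN:ℝ)-4)]
        have t0 : (2*(aN:ℝ)-1)*(aN:ℝ)*((3*w/2)*(B+2) - B - 3) ≤ (2*(aN:ℝ)-1)*(aN:ℝ)*C :=
          mul_le_mul_of_nonneg_left hC0
            (mul_nonneg (by linarith only [hS1R]) hSpos.le)
        have c1' : (0:ℝ) ≤ ((aN:ℝ)*B)*(w*(aN:ℝ) - 3.5*w + 3) :=
          mul_nonneg (mul_nonneg hSpos.le hB0.le) c1
        have key2 : 2*((aN:ℝ)+1)*(w-1)*((aN:ℝ)*B+1) ≤ (2*(aN:ℝ)-1)*C*(aN:ℝ) := by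
          nlinarith only [t0, c1', c2]
        have hfs := mul_lt_mul_of_pos_right hfin hSpos
        have h1a : (1/(aN:ℝ))*(aN:ℝ) = 1 := by
          field_simp
        have e : 2*((aN:ℝ)+1)*(w-1)*(B+1/(aN:ℝ))*(aN:ℝ)
            = 2*((aN:ℝ)+1)*(w-1)*((aN:ℝ)*B+1) := by
          linear_combination (2*((aN:ℝ)+1)*(w-1)) * h1a
        rw [e] at hfs
        linarith only [hfs, key2]
      · -- aN = 1
        have hsR : (aN:ℝ) = 1 := by rw [hsc]; norm_num
        have hAub' : (AN:ℝ) < 2*w - 3 := by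
          have := hAub
          rw [hsR] at this
          linarith only [this]
        have hBf1 : B*(3*w-2) < 2*w - 10 := by
          nlinarith only [hAw, hAub', hANR]
        by_cases hw5 : w ≤ 5
        · have := mul_pos hB0 (show (0:ℝ) < 3*w-2 by linarith only [hw2])
          linarith only [this, hBf1, hw5]
        · push_neg at hw5
          have hlog3 : (1:ℝ) < Real.log 3 := by
            rw [Real.lt_log_iff_exp_lt (by norm_num)]
            calc Real.exp 1 < 2.7182818286 := Real.exp_one_lt_d9
              _ < 3 := by norm_num
          have hB3 : Real.log 3 ≤ B := by
            rw [hBw]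
            apply Real.log_le_log (by norm_num)
            linarith only [hw5]
          have hBB := mul_le_mul_of_nonneg_right (show (1:ℝ) ≤ B by
              linarith only [hB3, hlog3])
            (show (0:ℝ) ≤ 3*w-2 by linarith only [hw2])
          linarith only [hBB, hBf1, hw5]
      · -- aN = 2
        have hsR : (aN:ℝ) = 2 := by rw [hsc]; norm_num
        have hAub' : (AN:ℝ) < 3*w - 6 := by
          have := hAub
          rw [hsR] at this
          linarith only [this]
        have hBf2 : B*(3*w-2) < 6*w - 22 := by
          nlinarith only [hAw, hAub', hANR]
        have hB2 : B < 2 := by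
          by_contra hB2'
          push_neg at hB2'
          have hBB := mul_le_mul_of_nonneg_right hB2'
            (show (0:ℝ) ≤ 3*w-2 by linarith only [hw2])
          linarith only [hBB, hBf2]
        have hp2 : (0:ℝ) ≤ (2-B)*(w-2) :=
          mul_nonneg (by linarith only [hB2]) (by linarith only [hw2])
        have key2 : 2*((aN:ℝ)+1)*(w-1)*((aN:ℝ)*B+1) ≤ (2*(aN:ℝ)-1)*C*(aN:ℝ) := by
          rw [hsR]
          nlinarith only [hC0, hp2, hB0, hw2]
        have hfs := mul_lt_mul_of_pos_right hfin hSpos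
        have h1a : (1/(aN:ℝ))*(aN:ℝ) = 1 := by
          field_simp
        have e : 2*((aN:ℝ)+1)*(w-1)*(B+1/(aN:ℝ))*(aN:ℝ)
            = 2*((aN:ℝ)+1)*(w-1)*((aN:ℝ)*B+1) := by
          linear_combination (2*((aN:ℝ)+1)*(w-1)) * h1a
        rw [e] at hfs
        linarith only [hfs, key2]
      · -- aN = 3
        have hsR : (aN:ℝ) = 3 := by rw [hsc]; norm_num
        have hAub' : (AN:ℝ) < 4*w - 9 := by
          have := hAub
          rw [hsR] at this
          linarith only [this]
        have hBf3 : B*(3*w-2) < 10*w - 34 := by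
          nlinarith only [hAw, hAub', hANR]
        have hB10 : 3*B < 10 := by
          by_contra hB10'
          push_neg at hB10'
          have hBB := mul_le_mul_of_nonneg_right (show (10:ℝ)/3 ≤ B by
              linarith only [hB10'])
            (show (0:ℝ) ≤ 3*w-2 by linarith only [hw2])
          linarith only [hBB, hBf3]
        have hp3 : (0:ℝ) ≤ (10-3*B)*(w-2) :=
          mul_nonneg (by linarith only [hB10]) (by linarith only [hw2])
        have key2 : 2*((aN:ℝ)+1)*(w-1)*((aN:ℝ)*B+1) ≤ (2*(aN:ℝ)-1)*C*(aN:ℝ) := by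
          rw [hsR]
          nlinarith only [hC0, hp3, hB0, hw2]
        have hfs := mul_lt_mul_of_pos_right hfin hSpos
        have h1a : (1/(aN:ℝ))*(aN:ℝ) = 1 := by
          field_simp
        have e : 2*((aN:ℝ)+1)*(w-1)*(B+1/(aN:ℝ))*(aN:ℝ)
            = 2*((aN:ℝ)+1)*(w-1)*((aN:ℝ)*B+1) := by
          linear_combination (2*((aN:ℝ)+1)*(w-1)) * h1a
        rw [e] at hfs
        linarith only [hfs, key2]
  -- final conversion
  have h1 : (hd n : ℤ) ≤ (MN : ℤ) := by exact_mod_cast key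
  rw [← hfl, ← hANdef]
  omega
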